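/- Let G be a König-Egerváry graph. Then every maximum stable set S of G meets each μ-critical edge of G in exactly one vertex, and likewise meets each α-critical edge of G in exactly one vertex (i.e., for each such edge, exactly one of its two endpoints lies in S). -/
import Mathlib


open scoped Classical

namespace KEG

variable {V : Type*}

/-- `S` is a stable (independent) set of vertices of `G`. -/
def IsStable (G : SimpleGraph V) (S : Finset V) : Prop :=
  ∀ ⦃x⦄, x ∈ S → ∀ ⦃y⦄, y ∈ S → ¬G.Adj x y

/-- The stability number `α(G)`: maximum cardinality of a stable set. -/
noncomputable def alphaNum (G : SimpleGraph V) : ℕ :=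
  sSup {n | ∃ S : Finset V, IsStable G S ∧ S.card = n}

/-- `S` is a maximum stable set of `G`. -/
def IsMaxStable (G : SimpleGraph V) (S : Finset V) : Prop :=
  IsStable G S ∧ S.card = alphaNum G

/-- `M` is a matching of `G`: a set of edges of `G`, pairwise non-incident. -/
def IsMatching (G : SimpleGraph V) (M : Finset (Sym2 V)) : Prop :=
  (∀ e ∈ M, e ∈ G.edgeSet) ∧
    ∀ e ∈ M, ∀ f ∈ M, e ≠ f → ∀ v : V, v ∈ e → v ∉ f

/-- The matching number `μ(G)`: maximum cardinality of a matching. -/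
noncomputable def muNum (G : SimpleGraph V) : ℕ :=
  sSup {n | ∃ M : Finset (Sym2 V), IsMatching G M ∧ M.card = n}

/-- A perfect matching: a matching covering every vertex. -/
def IsPerfectMatching (G : SimpleGraph V) (M : Finset (Sym2 V)) : Prop :=
  IsMatching G M ∧ ∀ v : V, ∃ e ∈ M, v ∈ e

/-- A maximal matching: a matching such that no edge of `G` can be added to it
while keeping pairwise non-incidence, i.e. every edge of `G` outside `M` is
incident to an edge of `M`. -/
def IsMaximalMatching (G : SimpleGraph V) (M : Finset (Sym2 V)) : Prop :=
  IsMatching G M ∧ ∀ e ∈ G.edgeSet, e ∉ M → ∃ f ∈ M, ∃ v : V, v ∈ e ∧ v ∈ f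

/-- `G` is a König-Egerváry graph: `α(G) + μ(G) = |V(G)|`. -/
def KonigEgervary (G : SimpleGraph V) [Fintype V] : Prop :=
  alphaNum G + muNum G = Fintype.card V

/-- `e` is an α-critical edge of `G`: `α(G - e) > α(G)`. -/
def IsAlphaCritical (G : SimpleGraph V) (e : Sym2 V) : Prop :=
  e ∈ G.edgeSet ∧ alphaNum G < alphaNum (G.deleteEdges {e})

/-- `e` is a μ-critical edge of `G`: `μ(G - e) < μ(G)`. -/
def IsMuCritical (G : SimpleGraph V) (e : Sym2 V) : Prop :=
  e ∈ G.edgeSet ∧ muNum (G.deleteEdges {e}) < muNum G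

/-- `core(G)`: the set of vertices belonging to every maximum stable set of `G`. -/
def core (G : SimpleGraph V) : Set V :=
  {v | ∀ S : Finset V, IsMaxStable G S → v ∈ S}

/-- `ξ(G) = |core(G)|`. -/
noncomputable def xi (G : SimpleGraph V) : ℕ := (core G).ncard

/-- `σ(G)`: the number of vertices belonging to no maximum stable set of `G`. -/
noncomputable def sigmaNum (G : SimpleGraph V) : ℕ :=
  {v : V | ∀ S : Finset V, IsMaxStable G S → v ∉ S}.ncard

/-- `η(G)`: the number of α-critical edges of `G`. -/
noncomputable def eta (G : SimpleGraph V) : ℕ :=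
  {e : Sym2 V | IsAlphaCritical G e}.ncard

/-- `N(A)`: the set of vertices adjacent to some vertex of `A`. -/
def nbhd (G : SimpleGraph V) (A : Set V) : Set V :=
  {v | ∃ a ∈ A, G.Adj a v}

/-- `N[A] = A ∪ N(A)`: the closed neighborhood of `A`. -/
def closedNbhd (G : SimpleGraph V) (A : Set V) : Set V :=
  A ∪ nbhd G A


lemma stable_bddAbove (G : SimpleGraph V) [Fintype V] :
    BddAbove {n | ∃ S : Finset V, IsStable G S ∧ S.card = n} := by
  refine ⟨Fintype.card V, ?_⟩
  rintro n ⟨S, -, rfl⟩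
  exact S.card_le_univ

lemma matching_bddAbove (G : SimpleGraph V) [Fintype V] :
    BddAbove {n | ∃ M : Finset (Sym2 V), IsMatching G M ∧ M.card = n} := by
  refine ⟨Fintype.card (Sym2 V), ?_⟩
  rintro n ⟨M, -, rfl⟩
  exact M.card_le_univ

lemma exists_max_stable (G : SimpleGraph V) [Fintype V] :
    ∃ S : Finset V, IsStable G S ∧ S.card = alphaNum G := by
  have h : ({n | ∃ S : Finset V, IsStable G S ∧ S.card = n} : Set ℕ).Nonempty :=
    ⟨0, ∅, fun x hx => absurd hx (Finset.notMem_empty x), by simp⟩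
  exact Nat.sSup_mem h (stable_bddAbove G)

lemma exists_max_matching (G : SimpleGraph V) [Fintype V] :
    ∃ M : Finset (Sym2 V), IsMatching G M ∧ M.card = muNum G := by
  have h : ({n | ∃ M : Finset (Sym2 V), IsMatching G M ∧ M.card = n} : Set ℕ).Nonempty :=
    ⟨0, ∅, ⟨fun e he => absurd he (Finset.notMem_empty e),
      fun e he => absurd he (Finset.notMem_empty e)⟩, by simp⟩
  exact Nat.sSup_mem h (matching_bddAbove G)

lemma card_le_alpha {G : SimpleGraph V} [Fintype V] {S : Finset V} (h : IsStable G S) :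
    S.card ≤ alphaNum G := le_csSup (stable_bddAbove G) ⟨S, h, rfl⟩

lemma card_le_mu {G : SimpleGraph V} [Fintype V] {M : Finset (Sym2 V)} (h : IsMatching G M) :
    M.card ≤ muNum G := le_csSup (matching_bddAbove G) ⟨M, h, rfl⟩

/-- A choice of a vertex of `f` outside `S`, when one exists. -/
noncomputable def pick (S : Finset V) (f : Sym2 V) : V :=
  if h : ∃ v, v ∈ f ∧ v ∉ S then h.choose else (Quot.out f).1

lemma pick_spec {S : Finset V} {f : Sym2 V} (h : ∃ v, v ∈ f ∧ v ∉ S) :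
    pick S f ∈ f ∧ pick S f ∉ S := by
  rw [pick, dif_pos h]
  exact h.choose_spec

lemma stable_edge_exists {G : SimpleGraph V} {S : Finset V} (hS : IsStable G S)
    {f : Sym2 V} (hf : f ∈ G.edgeSet) : ∃ v, v ∈ f ∧ v ∉ S := by
  induction f with
  | _ x y =>
    rw [SimpleGraph.mem_edgeSet] at hf
    by_cases hx : x ∈ S
    · exact ⟨y, Sym2.mem_mk_right x y, fun hy => hS hx hy hf⟩
    · exact ⟨x, Sym2.mem_mk_left x y, hx⟩

lemma matching_maps_to {G : SimpleGraph V} [Fintype V] {S : Finset V} {M : Finset (Sym2 V)}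
    (hS : IsStable G S) (hM : IsMatching G M) :
    ∀ f ∈ M, pick S f ∈ Finset.univ \ S := by
  intro f hf
  have h := pick_spec (stable_edge_exists hS (hM.1 f hf))
  simp [Finset.mem_sdiff, h.2]

lemma matching_injOn {G : SimpleGraph V} [Fintype V] {S : Finset V} {M : Finset (Sym2 V)}
    (hS : IsStable G S) (hM : IsMatching G M) :
    Set.InjOn (pick S) M := by
  intro f hf g hg hfg
  by_contra hne
  have h1 := pick_spec (stable_edge_exists hS (hM.1 f hf))
  have h2 := pick_spec (stable_edge_exists hS (hM.1 g hg))
  exact hM.2 f hf g hg hne (pick S f) h1.1 (hfg ▸ h2.1)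

lemma matching_card_le {G : SimpleGraph V} [Fintype V] {S : Finset V} {M : Finset (Sym2 V)}
    (hS : IsStable G S) (hM : IsMatching G M) :
    M.card ≤ (Finset.univ \ S).card :=
  Finset.card_le_card_of_injOn (pick S) (matching_maps_to hS hM) (matching_injOn hS hM)

lemma alpha_add_mu_le (G : SimpleGraph V) [Fintype V] :
    alphaNum G + muNum G ≤ Fintype.card V := by
  obtain ⟨S, hS, hScard⟩ := exists_max_stable G
  obtain ⟨M, hM, hMcard⟩ := exists_max_matching G
  have h1 := matching_card_le hS hM
  have h2 : (Finset.univ \ S).card = Fintype.card V - S.card := by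
    rw [Finset.card_sdiff_of_subset (Finset.subset_univ S), Finset.card_univ]
  have h3 : S.card ≤ Fintype.card V := S.card_le_univ
  omega

lemma alphaCritical_muCritical {G : SimpleGraph V} [Fintype V] (hG : KonigEgervary G)
    {e : Sym2 V} (h : IsAlphaCritical G e) : IsMuCritical G e := by
  refine ⟨h.1, ?_⟩
  have h2 := alpha_add_mu_le (G.deleteEdges {e})
  have h3 := h.2
  unfold KonigEgervary at hG
  omega

lemma final_aux {G : SimpleGraph V} {S : Finset V} (hSstable : IsStable G S) :
    ∀ e : Sym2 V, e ∈ G.edgeSet → (∀ v ∈ e, v ∉ S → v = pick S e) →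
    ∃! v : V, v ∈ e ∧ v ∈ S := by
  intro e
  induction e with
  | _ x y =>
    intro heE key
    have hadj : G.Adj x y := (G.mem_edgeSet).mp heE
    have hxy : x ≠ y := hadj.ne
    have hone : x ∈ S ∨ y ∈ S := by
      by_contra hcon
      push_neg at hcon
      have hx := key x (Sym2.mem_mk_left x y) hcon.1
      have hy := key y (Sym2.mem_mk_right x y) hcon.2
      exact hxy (hx.trans hy.symm)
    rcases hone with hx | hy
    · refine ⟨x, ⟨Sym2.mem_mk_left x y, hx⟩, ?_⟩
      rintro w ⟨hw, hwS⟩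
      rcases Sym2.mem_iff.mp hw with rfl | rfl
      · rfl
      · exact absurd hadj (hSstable hx hwS)
    · refine ⟨y, ⟨Sym2.mem_mk_right x y, hy⟩, ?_⟩
      rintro w ⟨hw, hwS⟩
      rcases Sym2.mem_iff.mp hw with rfl | rfl
      · exact absurd hadj (hSstable hwS hy)
      · rfl

/-- In a König-Egerváry graph, any maximum stable set meets each μ-critical
edge, and each α-critical edge, in exactly one vertex. -/
theorem stmt_6 {V : Type*} [Fintype V] (G : SimpleGraph V)
    (hG : KonigEgervary G) (S : Finset V) (hS : IsMaxStable G S)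
    (e : Sym2 V) (he : IsMuCritical G e ∨ IsAlphaCritical G e) :
    ∃! v : V, v ∈ e ∧ v ∈ S := by
  have he' : IsMuCritical G e := he.elim id (alphaCritical_muCritical hG)
  obtain ⟨heE, hmu⟩ := he'
  obtain ⟨M, hM, hMcard⟩ := exists_max_matching G
  obtain ⟨hSstable, hScard⟩ := hS
  -- e belongs to every maximum matching
  have heM : e ∈ M := by
    by_contra heM
    have hM' : IsMatching (G.deleteEdges {e}) M := by
      refine ⟨fun f hf => ?_, hM.2⟩
      rw [SimpleGraph.edgeSet_deleteEdges]
      exact ⟨hM.1 f hf, by rintro rfl; exact heM hf⟩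
    have := card_le_mu hM'
    omega
  -- the pick map is a bijection from M onto univ \ S
  have hT : (Finset.univ \ S).card = M.card := by
    have h2 : (Finset.univ \ S).card = Fintype.card V - S.card := by
      rw [Finset.card_sdiff_of_subset (Finset.subset_univ S), Finset.card_univ]
    have h3 : S.card ≤ Fintype.card V := S.card_le_univ
    unfold KonigEgervary at hG
    omega
  have himg : M.image (pick S) = Finset.univ \ S := by
    apply Finset.eq_of_subset_of_card_le
    · intro v hv
      obtain ⟨f, hf, rfl⟩ := Finset.mem_image.mp hv
      exact matching_maps_to hSstable hM f hf
    · rw [Finset.card_image_of_injOn (matching_injOn hSstable hM)]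
      exact hT.le
  -- if a vertex of e is outside S, it equals pick S e
  have key : ∀ v ∈ e, v ∉ S → v = pick S e := by
    intro v hv hvS
    have hvT : v ∈ Finset.univ \ S := by simp [hvS]
    rw [← himg, Finset.mem_image] at hvT
    obtain ⟨f, hf, hfv⟩ := hvT
    have hfe : f = e := by
      by_contra hne
      have hpf := (pick_spec (stable_edge_exists hSstable (hM.1 f hf))).1
      exact hM.2 f hf e heM hne v (hfv ▸ hpf) hv
    rw [← hfe, hfv]
  exact final_aux hSstable e heE key

end KEG
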